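/- Let K be a field and let K̃ denote the set of arithmetically fixed elements of K. Then K̃ is a subfield of K; that is, 0 ∈ K̃, 1 ∈ K̃, K̃ is closed under addition and multiplication, closed under additive inverses, and closed under multiplicative inverses of nonzero elements. -/

import Mathlib

/-- A map `f` is *arithmetic* on a subset `A` of a field `K` if it satisfies:
(1) if `1 ∈ A` then `f 1 = 1`;
(2) if `a, b ∈ A` and `a + b ∈ A` then `f (a + b) = f a + f b`;
(3) if `a, b ∈ A` and `a * b ∈ A` then `f (a * b) = f a * f b`.
(Only the values of `f` on `A` matter.) -/
def ArithmeticMap {K : Type*} [Field K] (A : Set K) (f : K → K) : Prop :=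
  ((1 : K) ∈ A → f 1 = 1) ∧
  (∀ a b : K, a ∈ A → b ∈ A → a + b ∈ A → f (a + b) = f a + f b) ∧
  (∀ a b : K, a ∈ A → b ∈ A → a * b ∈ A → f (a * b) = f a * f b)

/-- An element `r` of a field `K` is *arithmetically fixed* if there is a finite set
`A ⊆ K` with `r ∈ A` such that every arithmetic map `f : A → K` fixes `r`. -/
def ArithFixed {K : Type*} [Field K] (r : K) : Prop :=
  ∃ A : Finset K, r ∈ A ∧ ∀ f : K → K, ArithmeticMap (↑A : Set K) f → f r = r

lemma ArithmeticMap.mono {K : Type*} [Field K] {A B : Set K} {f : K → K}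
    (hAB : A ⊆ B) (h : ArithmeticMap B f) : ArithmeticMap A f :=
  ⟨fun h1 => h.1 (hAB h1),
   fun a b ha hb hab => h.2.1 a b (hAB ha) (hAB hb) (hAB hab),
   fun a b ha hb hab => h.2.2 a b (hAB ha) (hAB hb) (hAB hab)⟩

lemma ArithmeticMap.zero {K : Type*} [Field K] {A : Set K} {f : K → K}
    (h : ArithmeticMap A f) (h0 : (0 : K) ∈ A) : f 0 = 0 := by
  have := h.2.1 0 0 h0 h0 (by simpa using h0)
  rw [add_zero] at this
  exact left_eq_add.mp this

/-- The set `K̃` of arithmetically fixed elements of a field `K` is a subfield of `K`. -/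
theorem arithFixed_subfield (K : Type*) [Field K] :
    ArithFixed (0 : K) ∧
    ArithFixed (1 : K) ∧
    (∀ a b : K, ArithFixed a → ArithFixed b → ArithFixed (a + b)) ∧
    (∀ a b : K, ArithFixed a → ArithFixed b → ArithFixed (a * b)) ∧
    (∀ a : K, ArithFixed a → ArithFixed (-a)) ∧
    (∀ a : K, a ≠ 0 → ArithFixed a → ArithFixed a⁻¹) := by
  classical
  refine ⟨?_, ?_, ?_, ?_, ?_, ?_⟩
  · exact ⟨{0}, by simp, fun f hf => hf.zero (by simp)⟩
  · exact ⟨{1}, by simp, fun f hf => hf.1 (by simp)⟩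
  · -- addition
    rintro a b ⟨A, haA, hA⟩ ⟨B, hbB, hB⟩
    refine ⟨insert (a + b) (A ∪ B), by simp, fun f hf => ?_⟩
    have hA' : (↑A : Set K) ⊆ ↑(insert (a + b) (A ∪ B)) := by
      intro x hx; simp_all
    have hB' : (↑B : Set K) ⊆ ↑(insert (a + b) (A ∪ B)) := by
      intro x hx; simp_all
    have hfa := hA f (hf.mono hA')
    have hfb := hB f (hf.mono hB')
    have := hf.2.1 a b (by simp [haA]) (by simp [hbB]) (by simp)
    rw [this, hfa, hfb]
  · -- multiplication
    rintro a b ⟨A, haA, hA⟩ ⟨B, hbB, hB⟩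
    refine ⟨insert (a * b) (A ∪ B), by simp, fun f hf => ?_⟩
    have hA' : (↑A : Set K) ⊆ ↑(insert (a * b) (A ∪ B)) := by
      intro x hx; simp_all
    have hB' : (↑B : Set K) ⊆ ↑(insert (a * b) (A ∪ B)) := by
      intro x hx; simp_all
    have hfa := hA f (hf.mono hA')
    have hfb := hB f (hf.mono hB')
    have := hf.2.2 a b (by simp [haA]) (by simp [hbB]) (by simp)
    rw [this, hfa, hfb]
  · -- negation
    rintro a ⟨A, haA, hA⟩
    refine ⟨insert (-a) (insert 0 A), by simp, fun f hf => ?_⟩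
    have hA' : (↑A : Set K) ⊆ ↑(insert (-a) (insert 0 A)) := by
      intro x hx; simp_all
    have hfa := hA f (hf.mono hA')
    have hf0 : f 0 = 0 := hf.zero (by simp)
    have key := hf.2.1 a (-a) (by simp [haA]) (by simp) (by simp)
    rw [add_neg_cancel, hf0, hfa] at key
    linear_combination -key
  · -- inverse
    rintro a ha ⟨A, haA, hA⟩
    refine ⟨insert a⁻¹ (insert 1 A), by simp, fun f hf => ?_⟩
    have hA' : (↑A : Set K) ⊆ ↑(insert a⁻¹ (insert 1 A)) := by
      intro x hx; simp_all
    have hfa := hA f (hf.mono hA')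
    have hf1 : f 1 = 1 := hf.1 (by simp)
    have key := hf.2.2 a a⁻¹ (by simp [haA]) (by simp) (by simp [mul_inv_cancel₀ ha])
    rw [mul_inv_cancel₀ ha, hf1, hfa] at key
    exact mul_left_cancel₀ ha (key.symm.trans (mul_inv_cancel₀ ha).symm)
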